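/- arXiv:2505.23635 — 3 statements merged into one kernel-verified Lean document; each statement's English description precedes it below -/
import Mathlib

section
/- Let X be a standard Borel space and let d : X × X → [0,1] be a measurable pseudometric. Then the Wasserstein lift W(d) is a pseudometric on the set of Borel probability measures on X: for all Borel probability measures μ, ν, ρ on X one has W(d)(μ,μ) = 0, W(d)(μ,ν) = W(d)(ν,μ), and W(d)(μ,ρ) ≤ W(d)(μ,ν) + W(d)(ν,ρ). -/
open MeasureTheory

/-- A coupling of two probability measures `μ` and `ν` on `X` is a probability measure on
`X × X` whose marginals are `μ` and `ν`. -/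
def IsCoupling {X : Type*} [MeasurableSpace X]
    (κ : Measure (X × X)) (μ ν : Measure X) : Prop :=
  IsProbabilityMeasure κ ∧ κ.map Prod.fst = μ ∧ κ.map Prod.snd = ν

/-- The Wasserstein lift of a distance function `d : X × X → [0,1]`:
`W(d)(μ,ν) = ⨅_{κ coupling of μ,ν} ∫ d dκ`. -/
noncomputable def Wasserstein {X : Type*} [MeasurableSpace X]
    (d : X × X → ℝ) (μ ν : Measure X) : ℝ :=
  ⨅ κ : {κ : Measure (X × X) // IsCoupling κ μ ν}, ∫ q, d q ∂(κ.1)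

open ProbabilityTheory Kernel

section Aux

variable {X : Type*} [MeasurableSpace X]

lemma isCoupling_prod (μ ν : Measure X) [IsProbabilityMeasure μ] [IsProbabilityMeasure ν] :
    IsCoupling (μ.prod ν) μ ν := by
  refine ⟨inferInstance, ?_, ?_⟩ <;> simp

lemma aux_integrable {d : X × X → ℝ} (hd_meas : Measurable d)
    (hd_mem : ∀ q, d q ∈ Set.Icc (0 : ℝ) 1) {Y : Type*} [MeasurableSpace Y]
    {g : Y → X × X} (hg : Measurable g) (m : Measure Y) [IsProbabilityMeasure m] :
    Integrable (fun y => d (g y)) m := by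
  refine (integrable_const (1 : ℝ)).mono' (hd_meas.comp hg).aestronglyMeasurable
    (Filter.Eventually.of_forall fun y => ?_)
  rw [Real.norm_eq_abs, abs_of_nonneg (hd_mem (g y)).1]
  exact (hd_mem (g y)).2

lemma aux_bddBelow {d : X × X → ℝ} (hd_mem : ∀ q, d q ∈ Set.Icc (0 : ℝ) 1)
    (μ ν : Measure X) :
    BddBelow (Set.range fun κ : {κ : Measure (X × X) // IsCoupling κ μ ν} =>
      ∫ q, d q ∂(κ.1)) := by
  refine ⟨0, ?_⟩
  rintro x ⟨κ, rfl⟩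
  exact integral_nonneg fun q => (hd_mem q).1

lemma wasserstein_le {d : X × X → ℝ} (hd_mem : ∀ q, d q ∈ Set.Icc (0 : ℝ) 1)
    {μ ν : Measure X} {κ : Measure (X × X)} (hκ : IsCoupling κ μ ν) :
    Wasserstein d μ ν ≤ ∫ q, d q ∂κ :=
  ciInf_le (aux_bddBelow hd_mem μ ν) (⟨κ, hκ⟩ : {κ : Measure (X × X) // IsCoupling κ μ ν})

end Aux

/-- The Wasserstein lift of a measurable pseudometric on a standard Borel space is a
pseudometric on Borel probability measures. -/
theorem wasserstein_isPseudometric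
    {X : Type*} [MeasurableSpace X] [StandardBorelSpace X]
    (d : X × X → ℝ) (hd_meas : Measurable d)
    (hd_mem : ∀ q, d q ∈ Set.Icc (0 : ℝ) 1)
    (hd_refl : ∀ x, d (x, x) = 0)
    (hd_symm : ∀ x y, d (x, y) = d (y, x))
    (hd_tri : ∀ x y z, d (x, z) ≤ d (x, y) + d (y, z))
    (μ ν ρ : Measure X)
    [IsProbabilityMeasure μ] [IsProbabilityMeasure ν] [IsProbabilityMeasure ρ] :
    Wasserstein d μ μ = 0 ∧
    Wasserstein d μ ν = Wasserstein d ν μ ∧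
    Wasserstein d μ ρ ≤ Wasserstein d μ ν + Wasserstein d ν ρ := by
  have hne : Nonempty X := by
    by_contra h
    rw [not_nonempty_iff] at h
    have h1 := measure_univ (μ := μ)
    rw [Set.univ_eq_empty_iff.mpr (by infer_instance), measure_empty] at h1
    exact zero_ne_one h1
  -- a general symmetry inequality
  have symm_le : ∀ (μ' ν' : Measure X), IsProbabilityMeasure μ' → IsProbabilityMeasure ν' →
      Wasserstein d ν' μ' ≤ Wasserstein d μ' ν' := by
    intro μ' ν' hμ' hν'
    haveI := hμ'; haveI := hν'
    haveI : Nonempty {κ : Measure (X × X) // IsCoupling κ μ' ν'} :=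
      ⟨⟨μ'.prod ν', isCoupling_prod μ' ν'⟩⟩
    refine le_ciInf fun ⟨κ, hκp, hκ1, hκ2⟩ => ?_
    haveI := hκp
    have hcoup : IsCoupling (κ.map Prod.swap) ν' μ' := by
      refine ⟨Measure.isProbabilityMeasure_map measurable_swap.aemeasurable, ?_, ?_⟩
      · rw [Measure.map_map measurable_fst measurable_swap]; exact hκ2
      · rw [Measure.map_map measurable_snd measurable_swap]; exact hκ1
    refine le_trans (wasserstein_le hd_mem hcoup) (le_of_eq ?_)
    rw [integral_map measurable_swap.aemeasurable hd_meas.aestronglyMeasurable]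
    exact integral_congr_ae (Filter.Eventually.of_forall fun q => hd_symm q.2 q.1)
  refine ⟨?_, le_antisymm (symm_le ν μ inferInstance inferInstance) (symm_le μ ν inferInstance inferInstance), ?_⟩
  · -- reflexivity
    haveI : Nonempty {κ : Measure (X × X) // IsCoupling κ μ μ} :=
      ⟨⟨μ.prod μ, isCoupling_prod μ μ⟩⟩
    have hdiag : Measurable fun x : X => (x, x) := measurable_id.prodMk measurable_id
    have hcoup : IsCoupling (μ.map fun x => (x, x)) μ μ := by
      refine ⟨Measure.isProbabilityMeasure_map hdiag.aemeasurable, ?_, ?_⟩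
      · rw [Measure.map_map measurable_fst hdiag]; exact Measure.map_id
      · rw [Measure.map_map measurable_snd hdiag]; exact Measure.map_id
    refine le_antisymm ?_ (le_ciInf fun κ => integral_nonneg fun q => (hd_mem q).1)
    refine le_trans (wasserstein_le hd_mem hcoup) (le_of_eq ?_)
    rw [integral_map hdiag.aemeasurable hd_meas.aestronglyMeasurable]
    simp [hd_refl]
  · -- triangle inequality
    haveI : Nonempty {κ : Measure (X × X) // IsCoupling κ μ ν} :=
      ⟨⟨μ.prod ν, isCoupling_prod μ ν⟩⟩
    haveI : Nonempty {κ : Measure (X × X) // IsCoupling κ ν ρ} :=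
      ⟨⟨ν.prod ρ, isCoupling_prod ν ρ⟩⟩
    refine le_ciInf_add_ciInf fun ⟨κ₁, hκ₁p, hκ₁1, hκ₁2⟩ ⟨κ₂, hκ₂p, hκ₂1, hκ₂2⟩ => ?_
    haveI := hκ₁p; haveI := hκ₂p
    set κ₁' : Measure (X × X) := κ₁.map Prod.swap with hκ₁'def
    haveI : IsProbabilityMeasure κ₁' := Measure.isProbabilityMeasure_map measurable_swap.aemeasurable
    have hfst₁' : κ₁'.fst = ν := by
      rw [Measure.fst, hκ₁'def, Measure.map_map measurable_fst measurable_swap]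
      exact hκ₁2
    have hfst₂ : κ₂.fst = ν := hκ₂1
    set η₁ := κ₁'.condKernel with hη₁
    set η₂ := κ₂.condKernel with hη₂
    have hd₁ : ν ⊗ₘ η₁ = κ₁' := by
      conv_rhs => rw [← κ₁'.disintegrate κ₁'.condKernel]
      rw [hfst₁']
    have hd₂ : ν ⊗ₘ η₂ = κ₂ := by
      conv_rhs => rw [← κ₂.disintegrate κ₂.condKernel]
      rw [hfst₂]
    set m : Measure (X × (X × X)) := ν ⊗ₘ (η₁ ×ₖ η₂) with hm
    haveI : IsProbabilityMeasure m :=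
      ⟨by rw [hm, Measure.compProd_apply_univ]; exact measure_univ⟩
    -- the two projections of m
    have hmeas1 : Measurable fun p : X × (X × X) => (p.1, p.2.1) :=
      measurable_fst.prodMk (measurable_fst.comp measurable_snd)
    have hmeas2 : Measurable fun p : X × (X × X) => (p.1, p.2.2) :=
      measurable_fst.prodMk (measurable_snd.comp measurable_snd)
    have hm1 : m.map (fun p => (p.1, p.2.1)) = κ₁' := by
      rw [← hd₁]
      ext s hs
      rw [Measure.map_apply hmeas1 hs, hm, Measure.compProd_apply (hmeas1 hs),
        Measure.compProd_apply hs]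
      refine lintegral_congr fun y => ?_
      have hsec : MeasurableSet {x : X | (y, x) ∈ s} := measurable_prodMk_left hs
      have : (Prod.mk y ⁻¹' ((fun p : X × (X × X) => (p.1, p.2.1)) ⁻¹' s))
          = Prod.fst ⁻¹' {x : X | (y, x) ∈ s} := rfl
      rw [this, prod_apply, ← Measure.map_apply measurable_fst hsec,
        Measure.map_fst_prod, measure_univ, one_smul]
      rfl
    have hm2 : m.map (fun p => (p.1, p.2.2)) = κ₂ := by
      rw [← hd₂]
      ext s hs
      rw [Measure.map_apply hmeas2 hs, hm, Measure.compProd_apply (hmeas2 hs),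
        Measure.compProd_apply hs]
      refine lintegral_congr fun y => ?_
      have hsec : MeasurableSet {x : X | (y, x) ∈ s} := measurable_prodMk_left hs
      have : (Prod.mk y ⁻¹' ((fun p : X × (X × X) => (p.1, p.2.2)) ⁻¹' s))
          = Prod.snd ⁻¹' {x : X | (y, x) ∈ s} := rfl
      rw [this, prod_apply, ← Measure.map_apply measurable_snd hsec,
        Measure.map_snd_prod, measure_univ, one_smul]
      rfl
    -- the glued coupling
    set κ : Measure (X × X) := m.map (fun p => p.2) with hκdef
    have hcoup : IsCoupling κ μ ρ := by
      refine ⟨Measure.isProbabilityMeasure_map measurable_snd.aemeasurable, ?_, ?_⟩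
      · rw [hκdef, Measure.map_map measurable_fst measurable_snd]
        have : (Prod.fst ∘ Prod.snd : X × (X × X) → X)
            = Prod.snd ∘ (fun p : X × (X × X) => (p.1, p.2.1)) := rfl
        rw [this, ← Measure.map_map measurable_snd hmeas1, hm1, hκ₁'def,
          Measure.map_map measurable_snd measurable_swap]
        exact hκ₁1
      · rw [hκdef, Measure.map_map measurable_snd measurable_snd]
        have : (Prod.snd ∘ Prod.snd : X × (X × X) → X)
            = Prod.snd ∘ (fun p : X × (X × X) => (p.1, p.2.2)) := rfl
        rw [this, ← Measure.map_map measurable_snd hmeas2, hm2]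
        exact hκ₂2
    refine le_trans (wasserstein_le hd_mem hcoup) ?_
    -- integral estimate
    have hint : ∫ q, d q ∂κ = ∫ p, d p.2 ∂m := by
      rw [hκdef, integral_map measurable_snd.aemeasurable hd_meas.aestronglyMeasurable]
    have hint1 : ∫ p, d (p.2.1, p.1) ∂m = ∫ q, d q ∂κ₁ := by
      have hswapmeas : Measurable fun p : X × (X × X) => (p.2.1, p.1) :=
        (measurable_fst.comp measurable_snd).prodMk measurable_fst
      have hmap : m.map (fun p => (p.2.1, p.1)) = κ₁ := by
        have : (fun p : X × (X × X) => (p.2.1, p.1))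
            = Prod.swap ∘ (fun p : X × (X × X) => (p.1, p.2.1)) := rfl
        rw [this, ← Measure.map_map measurable_swap hmeas1, hm1, hκ₁'def,
          Measure.map_map measurable_swap measurable_swap]
        have : (Prod.swap ∘ Prod.swap : X × X → X × X) = id := Prod.swap_swap_eq
        rw [this, Measure.map_id]
      rw [← hmap, integral_map hswapmeas.aemeasurable hd_meas.aestronglyMeasurable]
    have hint2 : ∫ p, d (p.1, p.2.2) ∂m = ∫ q, d q ∂κ₂ := by
      rw [← hm2, integral_map hmeas2.aemeasurable hd_meas.aestronglyMeasurable]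
    rw [hint, ← hint1, ← hint2]
    have hi1 : Integrable (fun p : X × (X × X) => d (p.2.1, p.1)) m :=
      aux_integrable hd_meas hd_mem
        ((measurable_fst.comp measurable_snd).prodMk measurable_fst) m
    have hi2 : Integrable (fun p : X × (X × X) => d (p.1, p.2.2)) m :=
      aux_integrable hd_meas hd_mem hmeas2 m
    refine le_trans (integral_mono (aux_integrable hd_meas hd_mem measurable_snd m)
      (hi1.add hi2) fun p => ?_) (le_of_eq (integral_add hi1 hi2))
    exact hd_tri p.2.1 p.1 p.2.2
end

section
/- Let X be a set and let L be a set of functions X → [0,1] that contains all constant functions with values in [0,1] and is closed under: pointwise minimum (g, g' ∈ L ⇒ min(g,g') ∈ L), pointwise negation (g ∈ L ⇒ 1 − g ∈ L), truncated scalar addition (g ∈ L, r ∈ [0,1] ⇒ min(1, g + r) ∈ L), and truncated scalar subtraction (g ∈ L, r ∈ [0,1] ⇒ max(g − r, 0) ∈ L). Define the logical distance d_L(x,y) = ⨆_{g∈L} |g(x) − g(y)|. Then every function h : X → [0,1] that is nonexpansive with respect to d_L (i.e., h(x) − h(y) ≤ d_L(x,y) for all x,y ∈ X) is approximated by L at every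 pair of points: for all x, y ∈ X and every ε > 0 there exists g ∈ L with |g(x) − h(x)| < ε and |g(y) − h(y)| < ε. -/
theorem aux_approx
    {X : Type*} (L : Set (X → ℝ))
    (hval : ∀ g ∈ L, ∀ x, g x ∈ Set.Icc (0 : ℝ) 1)
    (hconst : ∀ r ∈ Set.Icc (0 : ℝ) 1, (fun _ : X => r) ∈ L)
    (hmin : ∀ g ∈ L, ∀ g' ∈ L, (fun x => min (g x) (g' x)) ∈ L)
    (hneg : ∀ g ∈ L, (fun x => 1 - g x) ∈ L)
    (hadd : ∀ g ∈ L, ∀ r ∈ Set.Icc (0 : ℝ) 1, (fun x => min 1 (g x + r)) ∈ L)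
    (hsub : ∀ g ∈ L, ∀ r ∈ Set.Icc (0 : ℝ) 1, (fun x => max (g x - r) 0) ∈ L)
    (h : X → ℝ) (hh : ∀ x, h x ∈ Set.Icc (0 : ℝ) 1)
    (hshort : ∀ x y, h x - h y ≤ ⨆ g : L, |g.1 x - g.1 y|) :
    ∀ x y : X, h y ≤ h x → ∀ ε > (0 : ℝ), ∃ g ∈ L, |g x - h x| < ε ∧ |g y - h y| < ε := by
  intro x y hyx ε hε
  obtain ⟨hhx0, hhx1⟩ := hh x
  obtain ⟨hhy0, hhy1⟩ := hh y
  by_cases hcase : h x - h y < ε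
  · refine ⟨fun _ => h y, hconst _ ⟨hhy0, hhy1⟩, ?_, ?_⟩
    · rw [abs_sub_comm, abs_of_nonneg (by linarith)]; linarith
    · simpa using hε
  · push_neg at hcase
    set ε' := ε / 2 with hε'
    have hε'pos : 0 < ε' := by positivity
    have hlt : h x - h y - ε' < ⨆ g : L, |g.1 x - g.1 y| := by
      have := hshort x y; linarith
    have : Nonempty ↥L := ⟨⟨fun _ => 0, hconst 0 ⟨le_refl 0, zero_le_one⟩⟩⟩
    obtain ⟨⟨g, hgL⟩, hg⟩ := exists_lt_of_lt_ciSup hlt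
    simp only at hg
    obtain ⟨g', hg'L, hg'⟩ : ∃ g' ∈ L, h x - h y - ε' < g' x - g' y := by
      rcases le_total (g y) (g x) with hc | hc
      · exact ⟨g, hgL, by rw [abs_of_nonneg (by linarith)] at hg; exact hg⟩
      · refine ⟨fun z => 1 - g z, hneg g hgL, ?_⟩
        rw [abs_of_nonpos (by linarith)] at hg
        simp only
        linarith
    obtain ⟨hgx0, hgx1⟩ := hval g' hg'L x
    obtain ⟨hgy0, hgy1⟩ := hval g' hg'L y
    rcases le_total (h y) (g' y) with hc | hc
    · set r := g' y - h y with hr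
      have hrI : r ∈ Set.Icc (0:ℝ) 1 := ⟨by linarith, by linarith⟩
      have h2 := hsub g' hg'L r hrI
      have h3 := hmin _ h2 _ (hconst (h x) ⟨hhx0, hhx1⟩)
      refine ⟨_, h3, ?_, ?_⟩
    
      · show |min (max (g' x - r) 0) (h x) - h x| < ε
        have hx2 : h x - ε' < g' x - r := by simp only [hr]; linarith
        have hgt : h x - ε' < min (max (g' x - r) 0) (h x) := by
          simp only [lt_min_iff]
          exact ⟨lt_of_lt_of_le hx2 (le_max_left _ _), by linarith⟩
        have hle : min (max (g' x - r) 0) (h x) ≤ h x := min_le_right _ _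
        rw [abs_sub_comm, abs_of_nonneg (by linarith)]
        linarith
      · show |min (max (g' y - r) 0) (h x) - h y| < ε
        have heq : max (g' y - r) 0 = h y := by
          rw [hr, max_eq_left (by linarith)]; ring
        rw [heq, min_eq_left hyx, sub_self, abs_zero]
        exact hε
    · set r := h y - g' y with hr
      have hrI : r ∈ Set.Icc (0:ℝ) 1 := ⟨by linarith, by linarith⟩
      have h2 := hadd g' hg'L r hrI
      have h3 := hmin _ h2 _ (hconst (h x) ⟨hhx0, hhx1⟩)
      refine ⟨_, h3, ?_, ?_⟩
      · show |min (min 1 (g' x + r)) (h x) - h x| < ε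
        have hx2 : h x - ε' < g' x + r := by simp only [hr]; linarith
        have hgt : h x - ε' < min (min 1 (g' x + r)) (h x) := by
          simp only [lt_min_iff]
          exact ⟨⟨by linarith, hx2⟩, by linarith⟩
        have hle : min (min 1 (g' x + r)) (h x) ≤ h x := min_le_right _ _
        rw [abs_sub_comm, abs_of_nonneg (by linarith)]
        linarith
      · show |min (min 1 (g' y + r)) (h x) - h y| < ε
        have heq : min 1 (g' y + r) = h y := by
          rw [hr, min_eq_right (by linarith)]; ring
        rw [heq, min_eq_left hyx, sub_self, abs_zero]
        exact hε

/-- If `L` is a set of `[0,1]`-valued functions containing the constants and closed under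
pointwise minimum, negation, truncated scalar addition and truncated scalar subtraction,
then every function `h : X → [0,1]` nonexpansive w.r.t. the logical distance
`d_L(x,y) = ⨆_{g∈L} |g x − g y|` is approximated by `L` at every pair of points. -/
theorem short_predicates_approximated
    {X : Type*} (L : Set (X → ℝ))
    (hval : ∀ g ∈ L, ∀ x, g x ∈ Set.Icc (0 : ℝ) 1)
    (hconst : ∀ r ∈ Set.Icc (0 : ℝ) 1, (fun _ : X => r) ∈ L)
    (hmin : ∀ g ∈ L, ∀ g' ∈ L, (fun x => min (g x) (g' x)) ∈ L)
    (hneg : ∀ g ∈ L, (fun x => 1 - g x) ∈ L)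
    (hadd : ∀ g ∈ L, ∀ r ∈ Set.Icc (0 : ℝ) 1, (fun x => min 1 (g x + r)) ∈ L)
    (hsub : ∀ g ∈ L, ∀ r ∈ Set.Icc (0 : ℝ) 1, (fun x => max (g x - r) 0) ∈ L)
    (h : X → ℝ) (hh : ∀ x, h x ∈ Set.Icc (0 : ℝ) 1)
    (hshort : ∀ x y, h x - h y ≤ ⨆ g : L, |g.1 x - g.1 y|) :
    ∀ x y : X, ∀ ε > (0 : ℝ), ∃ g ∈ L, |g x - h x| < ε ∧ |g y - h y| < ε := by
  intro x y ε hε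
  rcases le_total (h y) (h x) with hc | hc
  · exact aux_approx L hval hconst hmin hneg hadd hsub h hh hshort x y hc ε hε
  · obtain ⟨g, hg, h1, h2⟩ :=
      aux_approx L hval hconst hmin hneg hadd hsub h hh hshort y x hc ε hε
    exact ⟨g, hg, h2, h1⟩
end

section
/- Let (X, 𝒜) be a measurable space whose σ-algebra 𝒜 is countably generated. Then there exists a countable set S ⊆ 𝒜 that generates 𝒜 and is closed under complementation, such that the family F := { ⋂_{n∈ℕ} S_n : (S_n)_{n∈ℕ} a nonincreasing sequence in S } satisfies: (1) ∅ ∈ F; (2) F is closed under finite unions; (3) F is closed under countable intersections. -/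
/-- For a countable generating family `S`, the family of all intersections of
nonincreasing sequences from `S`. -/
def decreasingInters {X : Type*} (S : Set (Set X)) : Set (Set X) :=
  {A | ∃ T : ℕ → Set X, (∀ n, T n ∈ S) ∧ Antitone T ∧ A = ⋂ n, T n}

/-- If the σ-algebra of `X` is countably generated, then there is a countable generating
set `S` of measurable sets, closed under complementation, such that the family `F` of
intersections of nonincreasing sequences from `S` contains `∅` and is closed under
finite unions and countable intersections. -/
theorem countably_generated_closed_generating_paving
    {X : Type*} [m : MeasurableSpace X]
    (hcg : ∃ g : Set (Set X), g.Countable ∧ MeasurableSpace.generateFrom g = m) :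
    ∃ S : Set (Set X), S.Countable ∧ (∀ s ∈ S, MeasurableSet s) ∧
      MeasurableSpace.generateFrom S = m ∧
      (∀ s ∈ S, sᶜ ∈ S) ∧
      (∅ ∈ decreasingInters S) ∧
      (∀ A ∈ decreasingInters S, ∀ B ∈ decreasingInters S,
        A ∪ B ∈ decreasingInters S) ∧
      (∀ T : ℕ → Set X, (∀ n, T n ∈ decreasingInters S) →
        ⋂ n, T n ∈ decreasingInters S) := by
  obtain ⟨g, hgc, hgen⟩ := hcg
  refine ⟨MeasureTheory.generateSetAlgebra g,
    MeasureTheory.countable_generateSetAlgebra hgc, ?_, ?_, ?_, ?_, ?_, ?_⟩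
  · intro s hs
    rw [← hgen, ← MeasureTheory.generateFrom_generateSetAlgebra_eq]
    exact MeasurableSpace.measurableSet_generateFrom hs
  · rw [MeasureTheory.generateFrom_generateSetAlgebra_eq, hgen]
  · exact fun s hs => MeasureTheory.isSetAlgebra_generateSetAlgebra.compl_mem hs
  · exact ⟨fun _ => ∅, fun _ => MeasureTheory.isSetAlgebra_generateSetAlgebra.empty_mem,
      antitone_const, (Set.iInter_const ∅).symm⟩
  · rintro A ⟨T, hT, hTa, rfl⟩ B ⟨U, hU, hUa, rfl⟩
    refine ⟨fun n => T n ∪ U n,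
      fun n => MeasureTheory.isSetAlgebra_generateSetAlgebra.union_mem (hT n) (hU n),
      fun a b hab => Set.union_subset_union (hTa hab) (hUa hab), ?_⟩
    apply Set.Subset.antisymm
    · exact Set.union_subset (Set.iInter_mono fun n => Set.subset_union_left)
        (Set.iInter_mono fun n => Set.subset_union_right)
    · intro x hx
      simp only [Set.mem_iInter] at hx
      by_contra hc
      simp only [Set.mem_union, Set.mem_iInter, not_or, not_forall] at hc
      obtain ⟨⟨a, ha⟩, ⟨b, hb⟩⟩ := hc
      rcases hx (max a b) with h | h
      · exact ha (hTa (le_max_left a b) h)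
      · exact hb (hUa (le_max_right a b) h)
  · intro T hT
    choose U hU hUa hTU using hT
    refine ⟨fun k => ⋂ n ∈ Finset.range (k + 1), U n k, fun k =>
      MeasureTheory.isSetAlgebra_generateSetAlgebra.biInter_mem _ fun n _ => hU n k,
      ?_, ?_⟩
    · intro a b hab
      intro x hx
      simp only [Set.mem_iInter, Finset.mem_range] at hx ⊢
      intro n hn
      exact hUa n hab (hx n (lt_of_lt_of_le hn (by omega)))
    · ext x
      simp only [Set.mem_iInter, Finset.mem_range]
      constructor
      · intro hx k n hn
        have h := hx n
        rw [hTU n] at h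
        exact Set.mem_iInter.1 h k
      · intro hx n
        rw [hTU n]
        refine Set.mem_iInter.2 fun k => ?_
        rcases le_or_gt n k with h | h
        · exact hx k n (by omega)
        · exact hUa n (le_of_lt h) (hx n n (by omega))
end
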